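/- Let K be an O-category, Φ : ω → K a chain whose connecting morphisms are embeddings, and β : Φ ⇒ B a cocone in which every leg β_n is an embedding, with associated projections β_n^p. If α : Φ ⇒ A is any cocone in K, then the sequence (α_n ∘ β_n^p)_{n∈ℕ} is an ascending chain in the hom-dcpo K(B, A), and its directed supremum θ = ⊔_n α_n ∘ β_n^p satisfies θ ∘ β_n = α_n for every n, i.e. θ is a mediating morphism from β to α. -/

import Mathlib

open CategoryTheory OmegaCompletePartialOrder

universe v u

class OHom (K : Type u) [Category.{v} K] where
  homOrder : ∀ X Y : K, OmegaCompletePartialOrder (X ⟶ Y)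

attribute [instance] OHom.homOrder

/-- An O-category: a category enriched in dcpos with continuous composition. -/
class OCat (K : Type u) [Category.{v} K] extends OHom K where
  comp_mono : ∀ {X Y Z : K} {f f' : X ⟶ Y} {g g' : Y ⟶ Z},
    f ≤ f' → g ≤ g' → f ≫ g ≤ f' ≫ g'
  comp_cont_left : ∀ {X Y Z : K} (g : Y ⟶ Z) (c : Chain (X ⟶ Y))
    (hm : Monotone fun n => c n ≫ g),
    ωSup c ≫ g = ωSup ⟨fun n => c n ≫ g, hm⟩
  comp_cont_right : ∀ {X Y Z : K} (f : X ⟶ Y) (c : Chain (Y ⟶ Z))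
    (hm : Monotone fun n => f ≫ c n),
    f ≫ ωSup c = ωSup ⟨fun n => f ≫ c n, hm⟩

/-- Given an ω-chain of embeddings Φ, a cocone β of embeddings with nadir B
(with projections βp), and an arbitrary cocone α with nadir A, the sequence
(α_n ∘ β_n^p) is an ascending chain in K(B,A) whose supremum θ is a mediating morphism
from β to α, i.e. θ ∘ β_n = α_n for all n. -/
theorem mediating_morphism {K : Type u} [Category.{v} K] [OCat K]
    (Φ : ℕ → K) (e : ∀ n, Φ n ⟶ Φ (n + 1)) (ep : ∀ n, Φ (n + 1) ⟶ Φ n)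
    (he₁ : ∀ n, e n ≫ ep n = 𝟙 (Φ n)) (he₂ : ∀ n, ep n ≫ e n ≤ 𝟙 (Φ (n + 1)))
    (B : K) (β : ∀ n, Φ n ⟶ B) (βp : ∀ n, B ⟶ Φ n)
    (hβcocone : ∀ n, e n ≫ β (n + 1) = β n)
    (hβ₁ : ∀ n, β n ≫ βp n = 𝟙 (Φ n)) (hβ₂ : ∀ n, βp n ≫ β n ≤ 𝟙 B)
    (A : K) (α : ∀ n, Φ n ⟶ A) (hαcocone : ∀ n, e n ≫ α (n + 1) = α n) :
    ∃ hm : Monotone fun n => βp n ≫ α n,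
      ∀ n, β n ≫ ωSup ⟨fun n => βp n ≫ α n, hm⟩ = α n := by
  classical
  -- composite of connecting morphisms
  let E : ∀ n k, Φ n ⟶ Φ (n + k) := fun n k =>
    Nat.rec (𝟙 (Φ n)) (fun k f => f ≫ e (n + k)) k
  have hEβ : ∀ n k, E n k ≫ β (n + k) = β n := by
    intro n k
    induction k with
    | zero => simp [E]
    | succ k ih =>
      show (E n k ≫ e (n + k)) ≫ β (n + k + 1) = β n
      rw [Category.assoc, hβcocone, ih]
  have hEα : ∀ n k, E n k ≫ α (n + k) = α n := by
    intro n k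
    induction k with
    | zero => simp [E]
    | succ k ih =>
      show (E n k ≫ e (n + k)) ≫ α (n + k + 1) = α n
      rw [Category.assoc, hαcocone, ih]
  have hβE : ∀ n k, β n ≫ βp (n + k) = E n k := by
    intro n k
    calc β n ≫ βp (n + k) = (E n k ≫ β (n + k)) ≫ βp (n + k) := by rw [hEβ]
    _ = E n k ≫ (β (n + k) ≫ βp (n + k)) := by rw [Category.assoc]
    _ = E n k := by rw [hβ₁]; simp
  have key : ∀ n k, β n ≫ (βp (n + k) ≫ α (n + k)) = α n := by
    intro n k
    rw [← Category.assoc, hβE, hEα]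
  -- βp n ≤ βp (n+1) ≫ ep n
  have hproj : ∀ n, βp n ≤ βp (n + 1) ≫ ep n := by
    intro n
    have h1 : β n ≫ (βp (n + 1) ≫ ep n) = 𝟙 (Φ n) := by
      calc β n ≫ (βp (n + 1) ≫ ep n)
          = (e n ≫ β (n + 1)) ≫ (βp (n + 1) ≫ ep n) := by rw [hβcocone]
        _ = e n ≫ (β (n + 1) ≫ βp (n + 1)) ≫ ep n := by simp [Category.assoc]
        _ = e n ≫ ep n := by rw [hβ₁]; simp
        _ = 𝟙 (Φ n) := he₁ n
    calc βp n = (βp n ≫ β n) ≫ (βp (n + 1) ≫ ep n) := by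
          rw [Category.assoc, h1]; simp
      _ ≤ 𝟙 B ≫ (βp (n + 1) ≫ ep n) := OCat.comp_mono (hβ₂ n) le_rfl
      _ = βp (n + 1) ≫ ep n := by simp
  have hstep : ∀ n, βp n ≫ α n ≤ βp (n + 1) ≫ α (n + 1) := by
    intro n
    calc βp n ≫ α n = βp n ≫ (e n ≫ α (n + 1)) := by rw [hαcocone]
      _ = (βp n ≫ e n) ≫ α (n + 1) := by rw [Category.assoc]
      _ ≤ ((βp (n + 1) ≫ ep n) ≫ e n) ≫ α (n + 1) :=
          OCat.comp_mono (OCat.comp_mono (hproj n) le_rfl) le_rfl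
      _ = (βp (n + 1) ≫ (ep n ≫ e n)) ≫ α (n + 1) := by simp [Category.assoc]
      _ ≤ (βp (n + 1) ≫ 𝟙 (Φ (n + 1))) ≫ α (n + 1) :=
          OCat.comp_mono (OCat.comp_mono le_rfl (he₂ n)) le_rfl
      _ = βp (n + 1) ≫ α (n + 1) := by simp
  have hm : Monotone fun n => βp n ≫ α n :=
    monotone_nat_of_le_succ hstep
  refine ⟨hm, fun n => ?_⟩
  have hm2 : Monotone fun k => β n ≫ (βp k ≫ α k) :=
    fun i j hij => OCat.comp_mono le_rfl (hm hij)
  rw [OCat.comp_cont_right (β n) ⟨fun n => βp n ≫ α n, hm⟩ hm2]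
  apply le_antisymm
  · apply ωSup_le
    intro k
    show β n ≫ (βp k ≫ α k) ≤ α n
    rcases le_or_gt n k with h | h
    · obtain ⟨m, rfl⟩ := Nat.exists_eq_add_of_le h
      exact (key n m).le
    · calc β n ≫ (βp k ≫ α k) ≤ β n ≫ (βp n ≫ α n) :=
            OCat.comp_mono le_rfl (hm h.le)
        _ = α n := by simpa using key n 0
  · refine le_trans (le_of_eq ?_) (le_ωSup _ n)
    exact (key n 0).symm
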